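/- Halmos unitary dilation of a matrix contraction: if T is an n×n complex matrix with ‖T‖ ≤ 1 (operator norm), then the 2n×2n block matrix V = [[T, (1 - TT*)^{1/2}], [(1 - T*T)^{1/2}, -T*]] is unitary. -/

import Mathlib

open scoped Matrix ComplexOrder Matrix.Norms.L2Operator

/-- The square root of a positive semidefinite matrix, as `Matrix.PosSemidef.sqrt` was defined
in Mathlib (December 2024); it has since been removed from Mathlib. -/
noncomputable def Matrix.PosSemidef.sqrt {n 𝕜 : Type*} [Fintype n] [RCLike 𝕜] [DecidableEq n]
    {A : Matrix n n 𝕜} (hA : A.PosSemidef) : Matrix n n 𝕜 :=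
  hA.1.eigenvectorUnitary.1 * Matrix.diagonal ((↑) ∘ (√·) ∘ hA.1.eigenvalues) *
  (star hA.1.eigenvectorUnitary : Matrix n n 𝕜)

lemma Matrix.PosSemidef.posSemidef_sqrt {m : Type*} [Fintype m] [DecidableEq m]
    {A : Matrix m m ℂ} (hA : A.PosSemidef) : hA.sqrt.PosSemidef := by
  unfold Matrix.PosSemidef.sqrt
  apply Matrix.PosSemidef.mul_mul_conjTranspose_same
  refine Matrix.posSemidef_diagonal_iff.mpr fun i => ?_
  rw [Function.comp_apply, RCLike.nonneg_iff]
  constructor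
  · simp only [RCLike.ofReal_re]
    exact Real.sqrt_nonneg _
  · simp only [RCLike.ofReal_im]

lemma Matrix.PosSemidef.sqrt_mul_self {m : Type*} [Fintype m] [DecidableEq m]
    {A : Matrix m m ℂ} (hA : A.PosSemidef) : hA.sqrt * hA.sqrt = A := by
  have hU : star (hA.1.eigenvectorUnitary : Matrix m m ℂ) * hA.1.eigenvectorUnitary = 1 :=
    Matrix.mem_unitaryGroup_iff'.mp hA.1.eigenvectorUnitary.2
  conv_rhs => rw [hA.1.spectral_theorem, Unitary.conjStarAlgAut_apply]
  unfold Matrix.PosSemidef.sqrt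
  rw [show ∀ U D S : Matrix m m ℂ, U * D * S * (U * D * S) = U * (D * (S * U) * D) * S by
    intros; simp only [Matrix.mul_assoc], hU, Matrix.mul_one, Matrix.diagonal_mul_diagonal]
  congr 3
  funext i
  simp only [Function.comp_apply, RCLike.ofReal_real_eq_id, id]
  rw [← RCLike.ofReal_mul, Real.mul_self_sqrt (hA.eigenvalues_nonneg i)]

open Polynomial in
private lemma halmos_conj_pow {m : Type*} [Fintype m] [DecidableEq m]
    (u D : Matrix m m ℂ) (hu : u ∈ Matrix.unitaryGroup m ℂ) (k : ℕ) :
    (u * D * star u) ^ k = u * D ^ k * star u := by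
  induction k with
  | zero => simpa using (Matrix.mem_unitaryGroup_iff.mp hu).symm
  | succ k ih =>
    rw [pow_succ, ih, pow_succ]
    have h' : star u * u = 1 := Matrix.mem_unitaryGroup_iff'.mp hu
    calc u * D ^ k * star u * (u * D * star u)
        = u * D ^ k * (star u * u) * D * star u := by
          simp only [Matrix.mul_assoc]
      _ = u * (D ^ k * D) * star u := by rw [h']; simp only [Matrix.mul_assoc, Matrix.one_mul]

open Polynomial in
private lemma halmos_aeval_conj {m : Type*} [Fintype m] [DecidableEq m]
    (u D : Matrix m m ℂ) (hu : u ∈ Matrix.unitaryGroup m ℂ) (q : ℂ[X]) :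
    aeval (u * D * star u) q = u * aeval D q * star u := by
  induction q using Polynomial.induction_on' with
  | add p q hp hq => simp [map_add, hp, hq, Matrix.mul_add, Matrix.add_mul]
  | monomial k c =>
    simp only [aeval_monomial, halmos_conj_pow u D hu k,
      Algebra.algebraMap_eq_smul_one, smul_mul_assoc, Matrix.one_mul]
    simp [Matrix.mul_smul, Matrix.smul_mul]

open Polynomial in
private lemma halmos_aeval_diagonal {m : Type*} [Fintype m] [DecidableEq m]
    (d : m → ℂ) (q : ℂ[X]) :
    aeval (Matrix.diagonal d) q = Matrix.diagonal (fun i => q.eval (d i)) := by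
  induction q using Polynomial.induction_on' with
  | add p q hp hq => simp [map_add, hp, hq, Matrix.diagonal_add]
  | monomial k c =>
    simp [aeval_monomial, Matrix.diagonal_pow, eval_monomial,
      Matrix.algebraMap_eq_diagonal, Matrix.diagonal_mul_diagonal, Pi.algebraMap_def,
      Algebra.algebraMap_self_apply]

open Polynomial in
private lemma halmos_intertwine {m : Type*} [Fintype m] [DecidableEq m]
    (T A B : Matrix m m ℂ) (h : T * A = B * T) (q : ℂ[X]) :
    T * aeval A q = aeval B q * T := by
  have hpow : ∀ k : ℕ, T * A ^ k = B ^ k * T := by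
    intro k
    induction k with
    | zero => simp
    | succ k ih =>
      calc T * A ^ (k + 1) = T * A ^ k * A := by rw [pow_succ, Matrix.mul_assoc]
        _ = B ^ k * (T * A) := by rw [ih, Matrix.mul_assoc]
        _ = B ^ (k + 1) * T := by rw [h, pow_succ, Matrix.mul_assoc]
  induction q using Polynomial.induction_on' with
  | add p q hp hq => simp [map_add, hp, hq, Matrix.mul_add, Matrix.add_mul]
  | monomial k c =>
    simp only [aeval_monomial, Algebra.algebraMap_eq_smul_one, smul_mul_assoc,
      Matrix.one_mul, Matrix.mul_smul, Matrix.smul_mul]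
    rw [hpow k]

open Polynomial in
private lemma halmos_sqrt_eq_aeval {m : Type*} [Fintype m] [DecidableEq m]
    {A : Matrix m m ℂ} (hA : A.PosSemidef) (p : ℝ[X])
    (hp : ∀ i, p.eval (hA.1.eigenvalues i) = Real.sqrt (hA.1.eigenvalues i)) :
    hA.sqrt = aeval A (p.map (algebraMap ℝ ℂ)) := by
  conv_rhs => rw [hA.1.spectral_theorem, Unitary.conjStarAlgAut_apply]
  rw [halmos_aeval_conj _ _ hA.1.eigenvectorUnitary.2, halmos_aeval_diagonal]
  unfold Matrix.PosSemidef.sqrt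
  have hfun : (fun i => Polynomial.eval
      ((RCLike.ofReal ∘ hA.1.eigenvalues) i : ℂ) (p.map (algebraMap ℝ ℂ))) =
      RCLike.ofReal ∘ Real.sqrt ∘ hA.1.eigenvalues := by
    funext i
    simp only [Function.comp_apply]
    rw [show ((RCLike.ofReal (hA.1.eigenvalues i) : ℂ)) = algebraMap ℝ ℂ (hA.1.eigenvalues i)
      from rfl, eval_map, eval₂_at_apply, hp i]
  rw [hfun]

/-- Halmos unitary dilation of a matrix contraction: if `‖T‖ ≤ 1` (operator
norm), then `[[T, (1 - TT*)^{1/2}], [(1 - T*T)^{1/2}, -T*]]` is unitary. -/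
theorem halmos_dilation_unitary {n : ℕ} (T : Matrix (Fin n) (Fin n) ℂ)
    (hT : ‖T‖ ≤ 1)
    (h1 : (1 - Tᴴ * T).PosSemidef) (h2 : (1 - T * Tᴴ).PosSemidef) :
    Matrix.fromBlocks T h2.sqrt h1.sqrt (-Tᴴ) ∈
      Matrix.unitaryGroup (Fin n ⊕ Fin n) ℂ := by
  classical
  -- the interpolation polynomial for `Real.sqrt` on the eigenvalues
  set s : Finset ℝ :=
    (Finset.univ.image h1.1.eigenvalues) ∪ (Finset.univ.image h2.1.eigenvalues) with hs
  set p : Polynomial ℝ := Lagrange.interpolate s id Real.sqrt with hpdef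
  have heval : ∀ x ∈ s, p.eval x = Real.sqrt x := fun x hx =>
    Lagrange.eval_interpolate_at_node _ (Set.injOn_id _) hx
  have hTA : T * (1 - Tᴴ * T) = (1 - T * Tᴴ) * T := by
    simp [Matrix.mul_sub, Matrix.sub_mul, Matrix.mul_assoc]
  have key : T * h1.sqrt = h2.sqrt * T := by
    rw [halmos_sqrt_eq_aeval h1 p
        (fun i => heval _ (Finset.mem_union_left _ (Finset.mem_image_of_mem _ (Finset.mem_univ i)))),
      halmos_sqrt_eq_aeval h2 p
        (fun i => heval _ (Finset.mem_union_right _ (Finset.mem_image_of_mem _ (Finset.mem_univ i))))]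
    exact halmos_intertwine _ _ _ hTA _
  have key' : h1.sqrt * Tᴴ = Tᴴ * h2.sqrt := by
    have := congrArg Matrix.conjTranspose key
    simpa [Matrix.conjTranspose_mul, h1.posSemidef_sqrt.1.eq, h2.posSemidef_sqrt.1.eq] using this
  rw [Matrix.mem_unitaryGroup_iff, Matrix.star_eq_conjTranspose,
    Matrix.fromBlocks_conjTranspose, Matrix.fromBlocks_multiply]
  have e1 : T * Tᴴ + h2.sqrt * h2.sqrt.conjTranspose = 1 := by
    rw [h2.posSemidef_sqrt.1.eq, h2.sqrt_mul_self]; abel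
  have e2 : T * h1.sqrt.conjTranspose + h2.sqrt * (-Tᴴ)ᴴ = 0 := by
    rw [h1.posSemidef_sqrt.1.eq, key, Matrix.conjTranspose_neg, Matrix.conjTranspose_conjTranspose,
      Matrix.mul_neg]
    abel
  have e3 : h1.sqrt * Tᴴ + (-Tᴴ) * h2.sqrt.conjTranspose = 0 := by
    rw [h2.posSemidef_sqrt.1.eq, key', Matrix.neg_mul]
    abel
  have e4 : h1.sqrt * h1.sqrt.conjTranspose + (-Tᴴ) * (-Tᴴ)ᴴ = 1 := by
    rw [h1.posSemidef_sqrt.1.eq, h1.sqrt_mul_self, Matrix.conjTranspose_neg,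
      Matrix.conjTranspose_conjTranspose, Matrix.neg_mul, Matrix.mul_neg, neg_neg]
    abel
  rw [e1, e2, e3, e4, Matrix.fromBlocks_one]
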